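/- Let T > 0, λ : [0,T] → [0,∞) continuous, Λ(t) := ∫₀ᵗ λ(s) ds, and c > 0. Let θ : [0,T] × ℝ^d × ℝ^d → ℝ be differentiable in (x,ξ) with |∇ₓθ(t,x,ξ)| ≤ c·λ(t)·⟨ξ⟩ and |∇_ξθ(t,x,ξ)| ≤ c·λ(t)·⟨x⟩. Then there exists C > 0 depending only on c and Λ(T) such that any differentiable solution q, p : [s,t₀] → ℝ^d (0 ≤ s ≤ t₀ ≤ T) of q' = ∇_ξθ(τ,q,p), p' = −∇ₓθ(τ,q,p) with q(s) = y, p(s) = η satisfies, for all t ∈ [s,t₀]: |q(t) − y| ≤ C·Λ(t)·⟨y⟩ and |p(t) − η| ≤ C·Λ(t)·⟨η⟩. -/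
import Mathlib

open Set


/-- `Λ(t) = ∫₀ᵗ λ(s) ds`. -/
noncomputable def Lam (lam : ℝ → ℝ) (t : ℝ) : ℝ := ∫ s in (0:ℝ)..t, lam s

/-- The weight `⟨y⟩ = (e + |y|²)^{1/2}`. -/
noncomputable def jw {d : ℕ} (y : EuclideanSpace ℝ (Fin d)) : ℝ :=
  Real.sqrt (Real.exp 1 + ‖y‖ ^ 2)

/-- Estimate (5.4) of Lemma 5.3 of the paper (case `j = k = 0`, `α = β = 0`): in the
hyperbolic zone, the Hamiltonian flow satisfies `|q(t) − y| ≤ C·Λ(t)·⟨y⟩` and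
`|p(t) − η| ≤ C·Λ(t)·⟨η⟩`, where `C` depends only on `c` and `Λ(T)`. -/
lemma jw_le {d : ℕ} (y : EuclideanSpace ℝ (Fin d)) :
    jw y ≤ Real.sqrt (Real.exp 1) + ‖y‖ := by
  have h1 : Real.exp 1 + ‖y‖ ^ 2 ≤ (Real.sqrt (Real.exp 1) + ‖y‖) ^ 2 := by
    have h := Real.sq_sqrt (Real.exp_pos 1).le
    nlinarith [Real.sqrt_nonneg (Real.exp 1), norm_nonneg y]
  calc jw y ≤ Real.sqrt ((Real.sqrt (Real.exp 1) + ‖y‖) ^ 2) := Real.sqrt_le_sqrt h1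
    _ = Real.sqrt (Real.exp 1) + ‖y‖ := by
        rw [Real.sqrt_sq (by positivity)]

lemma le_two_jw {d : ℕ} (y : EuclideanSpace ℝ (Fin d)) :
    Real.sqrt (Real.exp 1) + ‖y‖ ≤ 2 * jw y := by
  have h1 : Real.sqrt (Real.exp 1) ≤ jw y := by
    apply Real.sqrt_le_sqrt
    nlinarith [norm_nonneg y]
  have h2 : ‖y‖ ≤ jw y := by
    have : ‖y‖ = Real.sqrt (‖y‖ ^ 2) := by
      rw [Real.sqrt_sq (norm_nonneg y)]
    rw [this]
    apply Real.sqrt_le_sqrt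
    nlinarith [(Real.exp_pos 1).le]
  linarith

lemma jw_pos {d : ℕ} (y : EuclideanSpace ℝ (Fin d)) : 0 < jw y := by
  apply Real.sqrt_pos.mpr
  nlinarith [Real.exp_pos 1, norm_nonneg y]

lemma key_estimate {E : Type*} [NormedAddCommGroup E] [NormedSpace ℝ E]
    (T M c : ℝ) (hc : 0 < c) (hM : 0 ≤ M) (hT : 0 ≤ T) (lam : ℝ → ℝ)
    (hcont : ContinuousOn lam (Set.Icc 0 T))
    (hnn : ∀ t ∈ Set.Icc 0 T, 0 ≤ lam t)
    (hMb : ∀ t ∈ Set.Icc 0 T, lam t ≤ M)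
    (s t₀ : ℝ) (hs : 0 ≤ s) (hst : s ≤ t₀) (ht₀ : t₀ ≤ T)
    (f g : ℝ → E)
    (hderiv : ∀ τ ∈ Set.Icc s t₀, HasDerivWithinAt f (g τ) (Set.Icc s t₀) τ)
    (hbound : ∀ τ ∈ Set.Icc s t₀,
      ‖g τ‖ ≤ c * lam τ * (Real.sqrt (Real.exp 1) + ‖f τ‖)) :
    ∀ t ∈ Set.Icc s t₀,
      ‖f t - f s‖ ≤ (c * Real.exp (c * (M + 1) * T)) * Lam lam t *
        (Real.sqrt (Real.exp 1) + ‖f s‖) := by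
  have hsub : Set.Icc s t₀ ⊆ Set.Icc 0 T := Icc_subset_Icc hs ht₀
  set e := Real.sqrt (Real.exp 1) with he
  have he0 : 0 < e := Real.sqrt_pos.mpr (Real.exp_pos 1)
  set K := c * (M + 1) with hK
  have hK0 : 0 < K := by positivity
  -- continuity of f
  have hfc : ContinuousOn f (Set.Icc s t₀) := fun τ hτ =>
    (hderiv τ hτ).continuousWithinAt
  -- right derivatives
  have hmem : ∀ τ ∈ Set.Ico s t₀, Set.Icc s t₀ ∈ nhdsWithin τ (Set.Ici τ) := by
    intro τ hτ
    refine Filter.mem_of_superset (inter_mem_nhdsWithin _ (Iio_mem_nhds hτ.2)) ?_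
    rintro u ⟨hu1, hu2⟩
    exact ⟨le_trans hτ.1 hu1, le_of_lt hu2⟩
  have hf' : ∀ τ ∈ Set.Ico s t₀, HasDerivWithinAt f (g τ) (Set.Ici τ) τ := fun τ hτ =>
    (hderiv τ (Ico_subset_Icc_self hτ)).mono_of_mem_nhdsWithin (hmem τ hτ)
  -- Gronwall
  have hgr : ∀ τ ∈ Set.Icc s t₀, e + ‖f τ‖ ≤ (e + ‖f s‖) * Real.exp (K * T) := by
    have bnd : ∀ τ ∈ Set.Ico s t₀, ‖g τ‖ ≤ K * ‖f τ‖ + K * e := by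
      intro τ hτ
      have hτ' : τ ∈ Set.Icc 0 T := hsub (Ico_subset_Icc_self hτ)
      have h1 : ‖g τ‖ ≤ c * lam τ * (e + ‖f τ‖) := hbound τ (Ico_subset_Icc_self hτ)
      have h2 : c * lam τ ≤ K := by
        have := hMb τ hτ'
        nlinarith [hc.le]
      have h3 : (0:ℝ) ≤ e + ‖f τ‖ := by positivity
      nlinarith [mul_le_mul_of_nonneg_right h2 h3]
    have hg := norm_le_gronwallBound_of_norm_deriv_right_le hfc hf' (le_refl ‖f s‖) bnd
    intro τ hτ
    have h4 := hg τ hτ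
    rw [gronwallBound_of_K_ne_0 hK0.ne'] at h4
    have h5 : K * e / K = e := by field_simp
    rw [h5] at h4
    have h4' : ‖f τ‖ ≤ ‖f s‖ * Real.exp (K*(τ-s)) + e * (Real.exp (K*(τ-s)) - 1) := h4
    have h6 : Real.exp (K * (τ - s)) ≤ Real.exp (K * T) := by
      apply Real.exp_le_exp.mpr
      have h7 : τ - s ≤ T := by
        have := (hsub hτ).1
        nlinarith [hτ.2, ht₀]
      nlinarith
    have h7 : (1:ℝ) ≤ Real.exp (K * (τ - s)) := by
      rw [Real.one_le_exp_iff]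
      nlinarith [hτ.1]
    have h8 : (e + ‖f s‖) * Real.exp (K*(τ-s)) ≤ (e + ‖f s‖) * Real.exp (K*T) :=
      mul_le_mul_of_nonneg_left h6 (by positivity)
    nlinarith [norm_nonneg (f s), norm_nonneg (f τ)]
  -- extended lam
  set lamE : ℝ → ℝ := fun u => lam (max 0 (min u T)) with hlamE
  have hmaps : ∀ u : ℝ, max 0 (min u T) ∈ Set.Icc 0 T := fun u =>
    ⟨le_max_left _ _, max_le hT (min_le_right u T)⟩
  have hlamEc : Continuous lamE := by
    apply hcont.comp_continuous
    · exact continuous_const.max (continuous_id.min continuous_const)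
    · exact hmaps
  have hlamEeq : ∀ u ∈ Set.Icc 0 T, lamE u = lam u := by
    intro u hu
    simp only [hlamE]
    rw [min_eq_left hu.2, max_eq_right hu.1]
  set LamE : ℝ → ℝ := fun u => ∫ x in (0:ℝ)..u, lamE x with hLamE
  have hLamEeq : ∀ u ∈ Set.Icc 0 T, Lam lam u = LamE u := by
    intro u hu
    apply intervalIntegral.integral_congr
    intro x hx
    rw [Set.uIcc_of_le hu.1] at hx
    exact (hlamEeq x ⟨hx.1, le_trans hx.2 hu.2⟩).symm
  have hLamEderiv : ∀ u : ℝ, HasDerivAt LamE (lamE u) u := fun u =>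
    (hlamEc.integral_hasStrictDerivAt 0 u).hasDerivAt
  have hLamEcont : Continuous LamE := by
    rw [continuous_iff_continuousAt]
    exact fun u => (hLamEderiv u).continuousAt
  -- the boundary function
  set A := c * Real.exp (K * T) * (e + ‖f s‖) with hA
  have hA0 : 0 ≤ A := by positivity
  set B : ℝ → ℝ := fun τ => A * (Lam lam τ - Lam lam s) with hB
  set BE : ℝ → ℝ := fun τ => A * (LamE τ - LamE s) with hBE
  have hsmem : s ∈ Set.Icc s t₀ := ⟨le_refl s, hst⟩
  have hBeq : ∀ τ ∈ Set.Icc s t₀, B τ = BE τ := by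
    intro τ hτ
    simp only [hB, hBE, hLamEeq τ (hsub hτ), hLamEeq s (hsub hsmem)]
  have hBc : ContinuousOn B (Set.Icc s t₀) :=
    ContinuousOn.congr (f := BE)
      (continuous_const.mul (hLamEcont.sub continuous_const)).continuousOn hBeq
  have hB' : ∀ τ ∈ Set.Ico s t₀, HasDerivWithinAt B (A * lam τ) (Set.Ici τ) τ := by
    intro τ hτ
    have hτ' : τ ∈ Set.Icc 0 T := hsub (Ico_subset_Icc_self hτ)
    have hd : HasDerivAt BE (A * lam τ) τ := by
      have h := ((hLamEderiv τ).sub_const (LamE s)).const_mul A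
      rwa [hlamEeq τ hτ'] at h
    refine hd.hasDerivWithinAt.congr_of_eventuallyEq ?_
      (hBeq τ (Ico_subset_Icc_self hτ))
    exact Filter.eventually_of_mem (hmem τ hτ) hBeq
  -- apply the fencing theorem
  have hmain : ∀ t ∈ Set.Icc s t₀, ‖f t - f s‖ ≤ B t := by
    intro t ht
    refine image_norm_le_of_norm_deriv_right_le_deriv_boundary'
      (f := fun τ => f τ - f s) (f' := g)
      (hfc.sub continuousOn_const) ?_ ?_ hBc hB' ?_ ht
    · exact fun τ hτ => (hf' τ hτ).sub_const (f s)
    · simp [hB]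
    · intro τ hτ
      have hτ' : τ ∈ Set.Icc 0 T := hsub (Ico_subset_Icc_self hτ)
      have h1 : ‖g τ‖ ≤ c * lam τ * (e + ‖f τ‖) := hbound τ (Ico_subset_Icc_self hτ)
      have h2 := hgr τ (Ico_subset_Icc_self hτ)
      have hl := hnn τ hτ'
      calc ‖g τ‖ ≤ c * lam τ * (e + ‖f τ‖) := h1
        _ ≤ c * lam τ * ((e + ‖f s‖) * Real.exp (K * T)) := by
            apply mul_le_mul_of_nonneg_left h2 (by positivity)
        _ = A * lam τ := by rw [hA]; ring
  -- conclude
  intro t ht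
  have h1 := hmain t ht
  have hLs : 0 ≤ Lam lam s := by
    apply intervalIntegral.integral_nonneg hs
    intro u hu
    exact hnn u ⟨hu.1, le_trans hu.2 (le_trans hst ht₀)⟩
  calc ‖f t - f s‖ ≤ A * (Lam lam t - Lam lam s) := h1
    _ ≤ A * Lam lam t := by nlinarith
    _ = c * Real.exp (K * T) * Lam lam t * (e + ‖f s‖) := by rw [hA]; ring


/-- main -/
theorem hyperbolic_zone_flow_deviation
    (d : ℕ) (T : ℝ) (hT : 0 < T) (lam : ℝ → ℝ)
    (hcont : ContinuousOn lam (Set.Icc 0 T))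
    (hnn : ∀ t ∈ Set.Icc 0 T, 0 ≤ lam t)
    (c : ℝ) (hc : 0 < c) :
    ∃ C : ℝ, 0 < C ∧
      ∀ θ : ℝ → EuclideanSpace ℝ (Fin d) → EuclideanSpace ℝ (Fin d) → ℝ,
        (∀ t ∈ Set.Icc 0 T, ∀ (x ξ : EuclideanSpace ℝ (Fin d)),
          DifferentiableAt ℝ (fun x' => θ t x' ξ) x) →
        (∀ t ∈ Set.Icc 0 T, ∀ (x ξ : EuclideanSpace ℝ (Fin d)),
          DifferentiableAt ℝ (fun ξ' => θ t x ξ') ξ) →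
        (∀ t ∈ Set.Icc 0 T, ∀ (x ξ : EuclideanSpace ℝ (Fin d)),
          ‖gradient (fun x' => θ t x' ξ) x‖ ≤ c * lam t * jw ξ) →
        (∀ t ∈ Set.Icc 0 T, ∀ (x ξ : EuclideanSpace ℝ (Fin d)),
          ‖gradient (fun ξ' => θ t x ξ') ξ‖ ≤ c * lam t * jw x) →
      ∀ s t₀ : ℝ, 0 ≤ s → s ≤ t₀ → t₀ ≤ T →
      ∀ q p : ℝ → EuclideanSpace ℝ (Fin d),
        (∀ τ ∈ Set.Icc s t₀, HasDerivWithinAt q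
          (gradient (fun ξ' => θ τ (q τ) ξ') (p τ)) (Set.Icc s t₀) τ) →
        (∀ τ ∈ Set.Icc s t₀, HasDerivWithinAt p
          (-(gradient (fun x' => θ τ x' (p τ)) (q τ))) (Set.Icc s t₀) τ) →
      ∀ t ∈ Set.Icc s t₀,
        ‖q t - q s‖ ≤ C * Lam lam t * jw (q s) ∧
        ‖p t - p s‖ ≤ C * Lam lam t * jw (p s) := by
  obtain ⟨M, hMb⟩ := isCompact_Icc.exists_bound_of_continuousOn hcont
  have hM0 : 0 ≤ M := le_trans (norm_nonneg (lam 0)) (hMb 0 ⟨le_refl 0, hT.le⟩)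
  have hMb' : ∀ t ∈ Set.Icc 0 T, lam t ≤ M := fun t ht =>
    le_trans (le_abs_self _) (hMb t ht)
  refine ⟨2 * (c * Real.exp (c * (M + 1) * T)), by positivity, ?_⟩
  intro θ _ _ hgradx hgradxi s t₀ hs hst ht₀ q p hq hp t ht
  have hsub : Set.Icc s t₀ ⊆ Set.Icc 0 T := Set.Icc_subset_Icc hs ht₀
  have hLt : 0 ≤ Lam lam t := by
    apply intervalIntegral.integral_nonneg (le_trans hs ht.1)
    intro u hu
    exact hnn u ⟨hu.1, le_trans hu.2 (le_trans ht.2 ht₀)⟩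
  constructor
  · have hkey := key_estimate T M c hc hM0 hT.le lam hcont hnn hMb' s t₀ hs hst ht₀
      q (fun τ => gradient (fun ξ' => θ τ (q τ) ξ') (p τ)) hq ?_ t ht
    · calc ‖q t - q s‖ ≤ (c * Real.exp (c * (M + 1) * T)) * Lam lam t *
            (Real.sqrt (Real.exp 1) + ‖q s‖) := hkey
        _ ≤ (c * Real.exp (c * (M + 1) * T)) * Lam lam t * (2 * jw (q s)) := by
            apply mul_le_mul_of_nonneg_left (le_two_jw (q s)) (by positivity)
        _ = 2 * (c * Real.exp (c * (M + 1) * T)) * Lam lam t * jw (q s) := by ring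
    · intro τ hτ
      have hτ' : τ ∈ Set.Icc 0 T := hsub hτ
      calc ‖gradient (fun ξ' => θ τ (q τ) ξ') (p τ)‖ ≤ c * lam τ * jw (q τ) :=
            hgradxi τ hτ' (q τ) (p τ)
        _ ≤ c * lam τ * (Real.sqrt (Real.exp 1) + ‖q τ‖) := by
            apply mul_le_mul_of_nonneg_left (jw_le (q τ))
            have := hnn τ hτ'
            positivity
  · have hkey := key_estimate T M c hc hM0 hT.le lam hcont hnn hMb' s t₀ hs hst ht₀
      p (fun τ => -(gradient (fun x' => θ τ x' (p τ)) (q τ))) hp ?_ t ht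
    · calc ‖p t - p s‖ ≤ (c * Real.exp (c * (M + 1) * T)) * Lam lam t *
            (Real.sqrt (Real.exp 1) + ‖p s‖) := hkey
        _ ≤ (c * Real.exp (c * (M + 1) * T)) * Lam lam t * (2 * jw (p s)) := by
            apply mul_le_mul_of_nonneg_left (le_two_jw (p s)) (by positivity)
        _ = 2 * (c * Real.exp (c * (M + 1) * T)) * Lam lam t * jw (p s) := by ring
    · intro τ hτ
      have hτ' : τ ∈ Set.Icc 0 T := hsub hτ
      calc ‖-(gradient (fun x' => θ τ x' (p τ)) (q τ))‖
          = ‖gradient (fun x' => θ τ x' (p τ)) (q τ)‖ := norm_neg _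
        _ ≤ c * lam τ * jw (p τ) := hgradx τ hτ' (q τ) (p τ)
        _ ≤ c * lam τ * (Real.sqrt (Real.exp 1) + ‖p τ‖) := by
            apply mul_le_mul_of_nonneg_left (jw_le (p τ))
            have := hnn τ hτ'
            positivity
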